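/- For a > 0, the degree-1 polynomial P(z) = (1 - i a z)/sqrt(a^2+1) satisfies |P(x)| <= 1 for all x in [-1,1], and for every complex polynomial p of degree at most 1 with |p(x)| <= 1 on [-1,1], one has |p(ai)| <= |P(ai)| = sqrt(a^2+1). -/

import Mathlib

open Polynomial

theorem stmt16 (a : ℝ) (ha : 0 < a) :
    (∀ x : ℝ, x ∈ Set.Icc (-1 : ℝ) 1 →
      ‖(1 - Complex.I * (a : ℂ) * (x : ℂ)) / (Real.sqrt (a ^ 2 + 1) : ℂ)‖ ≤ 1) ∧
    ‖(1 - Complex.I * (a : ℂ) * ((a : ℂ) * Complex.I)) /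
        (Real.sqrt (a ^ 2 + 1) : ℂ)‖ = Real.sqrt (a ^ 2 + 1) ∧
    ∀ p : Polynomial ℂ, p.degree ≤ 1 →
      (∀ x : ℝ, x ∈ Set.Icc (-1 : ℝ) 1 → ‖p.eval (x : ℂ)‖ ≤ 1) →
      ‖p.eval ((a : ℂ) * Complex.I)‖ ≤
        ‖(1 - Complex.I * (a : ℂ) * ((a : ℂ) * Complex.I)) /
          (Real.sqrt (a ^ 2 + 1) : ℂ)‖ := by
  have hpos : (0:ℝ) < a ^ 2 + 1 := by positivity
  set s : ℝ := Real.sqrt (a ^ 2 + 1) with hs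
  have hspos : 0 < s := Real.sqrt_pos.mpr hpos
  have hs2 : s ^ 2 = a ^ 2 + 1 := Real.sq_sqrt hpos.le
  have habs1 : ∀ x : ℝ, ‖(1 - Complex.I * (a : ℂ) * (x : ℂ))‖
      = Real.sqrt (1 + a ^ 2 * x ^ 2) := by
    intro x
    rw [Complex.norm_def, Complex.normSq_apply]
    congr 1
    simp [Complex.sub_re, Complex.sub_im, Complex.mul_re, Complex.mul_im]
    ring
  have hval : ‖((1 - Complex.I * (a : ℂ) * ((a : ℂ) * Complex.I)) /
      (s : ℂ))‖ = s := by
    have h1 : (1 - Complex.I * (a : ℂ) * ((a : ℂ) * Complex.I)) = ((a^2 + 1 : ℝ) : ℂ) := by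
      push_cast
      rw [mul_assoc, mul_comm Complex.I, mul_assoc, mul_assoc, Complex.I_mul_I]
      ring
    rw [h1, norm_div, Complex.norm_real, Complex.norm_real,
      Real.norm_of_nonneg hpos.le, Real.norm_of_nonneg hspos.le]
    rw [← hs2]
    field_simp
  refine ⟨?_, hval, ?_⟩
  · intro x hx
    rw [norm_div, Complex.norm_real, Real.norm_of_nonneg hspos.le, div_le_one hspos, habs1]
    rw [hs]
    apply Real.sqrt_le_sqrt
    have hx2 : x ^ 2 ≤ 1 := by
      rcases hx with ⟨h1, h2⟩; nlinarith
    nlinarith [sq_nonneg a]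
  · intro p hdeg hbd
    rw [hval]
    have hp := Polynomial.eq_X_add_C_of_degree_le_one hdeg
    set c1 := p.coeff 1
    set c0 := p.coeff 0
    have heval : ∀ z : ℂ, p.eval z = c1 * z + c0 := by
      intro z; rw [hp]; simp
    have h1 : ‖(c1 + c0)‖ ≤ 1 := by
      have := hbd 1 (by constructor <;> norm_num)
      rwa [heval, Complex.ofReal_one, mul_one] at this
    have h2 : ‖(-c1 + c0)‖ ≤ 1 := by
      have := hbd (-1) (by constructor <;> norm_num)
      rw [heval] at this
      push_cast at this
      rwa [mul_neg_one] at this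
    rw [heval]
    have hiden : c1 * ((a:ℂ) * Complex.I) + c0 =
        ((1 + (a:ℂ) * Complex.I)/2) * (c1 + c0) + ((1 - (a:ℂ)*Complex.I)/2) * (-c1 + c0) := by
      ring
    rw [hiden]
    have habsfac : ‖((1 + (a:ℂ) * Complex.I)/2)‖ = s / 2 ∧
        ‖((1 - (a:ℂ) * Complex.I)/2)‖ = s / 2 := by
      constructor <;>
      · rw [norm_div, Complex.norm_two, Complex.norm_def, Complex.normSq_apply]
        simp [Complex.add_re, Complex.add_im, Complex.mul_re, Complex.mul_im]
        rw [hs]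
        congr 1
        ring_nf
    calc ‖(((1 + (a:ℂ) * Complex.I)/2) * (c1 + c0) + ((1 - (a:ℂ)*Complex.I)/2) * (-c1 + c0))‖
        ≤ ‖(((1 + (a:ℂ) * Complex.I)/2) * (c1 + c0))‖ +
          ‖(((1 - (a:ℂ)*Complex.I)/2) * (-c1 + c0))‖ := norm_add_le _ _
      _ = (s/2) * ‖(c1 + c0)‖ + (s/2) * ‖(-c1 + c0)‖ := by
          rw [norm_mul, norm_mul, habsfac.1, habsfac.2]
      _ ≤ (s/2) * 1 + (s/2) * 1 := by
          gcongr
      _ = s := by ring
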